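/- arXiv:2002.10802 — 7 statements merged into one kernel-verified Lean document; each statement's English description precedes it below -/
import Mathlib

section
/- The scoring rule hs(q) = 1 - √((1-q)/q) on [0,1] is proper: for every p ∈ (0,1), the function q ↦ p·hs(q) + (1-p)·hs(1-q) is uniquely maximized at q = p. -/
open scoped Real

/-- The scoring rule `hs(q) = 1 - √((1-q)/q)`, with `hs 0 = -∞`. -/
noncomputable def hs : ℝ → EReal := fun q =>
  if q = 0 then ⊥ else ((1 - Real.sqrt ((1 - q) / q) : ℝ) : EReal)

lemma hs_of_pos {q : ℝ} (hq : 0 < q) :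
    hs q = ((1 - Real.sqrt ((1 - q) / q) : ℝ) : EReal) := by
  simp [hs, hq.ne']

lemma sqrt_ratio {q : ℝ} (hq0 : 0 < q) (hq1 : q < 1) :
    Real.sqrt ((1 - q) / q) = Real.sqrt (1 - q) / Real.sqrt q := by
  rw [Real.sqrt_div' _ hq0.le]

lemma key_real (p : ℝ) (hp0 : 0 < p) (hp1 : p < 1) (q : ℝ) (hq0 : 0 < q)
    (hq1 : q < 1) (hqp : q ≠ p) :
    p * (1 - Real.sqrt ((1 - q) / q)) + (1 - p) * (1 - Real.sqrt ((1 - (1 - q)) / (1 - q))) <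
      p * (1 - Real.sqrt ((1 - p) / p)) + (1 - p) * (1 - Real.sqrt ((1 - (1 - p)) / (1 - p))) := by
  have hq1' : (0:ℝ) < 1 - q := by linarith
  have hp1' : (0:ℝ) < 1 - p := by linarith
  set sp := Real.sqrt p with hsp
  set s1p := Real.sqrt (1 - p) with hs1p
  set sq := Real.sqrt q with hsq
  set s1q := Real.sqrt (1 - q) with hs1q
  have hsp0 : 0 < sp := Real.sqrt_pos.2 hp0
  have hs1p0 : 0 < s1p := Real.sqrt_pos.2 hp1'
  have hsq0 : 0 < sq := Real.sqrt_pos.2 hq0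
  have hs1q0 : 0 < s1q := Real.sqrt_pos.2 hq1'
  have hsp2 : sp ^ 2 = p := Real.sq_sqrt hp0.le
  have hs1p2 : s1p ^ 2 = 1 - p := Real.sq_sqrt hp1'.le
  have hsq2 : sq ^ 2 = q := Real.sq_sqrt hq0.le
  have hs1q2 : s1q ^ 2 = 1 - q := Real.sq_sqrt hq1'.le
  have e1 : Real.sqrt ((1 - q) / q) = s1q / sq := sqrt_ratio hq0 hq1
  have e2 : Real.sqrt ((1 - (1 - q)) / (1 - q)) = sq / s1q := by
    have h := sqrt_ratio hq1' (by linarith : (1:ℝ) - q < 1)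
    simp only [show (1 : ℝ) - (1 - q) = q from by ring] at h ⊢; exact h
  have e3 : Real.sqrt ((1 - p) / p) = s1p / sp := sqrt_ratio hp0 hp1
  have e4 : Real.sqrt ((1 - (1 - p)) / (1 - p)) = sp / s1p := by
    have h := sqrt_ratio hp1' (by linarith : (1:ℝ) - p < 1)
    simp only [show (1 : ℝ) - (1 - p) = p from by ring] at h ⊢; exact h
  rw [e1, e2, e3, e4]
  have hne : sp * s1q ≠ s1p * sq := by
    intro h
    apply hqp
    have := congrArg (· ^ 2) h
    simp only [mul_pow, hsp2, hs1p2, hsq2, hs1q2] at this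
    nlinarith
  have hsqpos : 0 < (sp * s1q - s1p * sq) ^ 2 :=
    pow_two_pos_of_ne_zero (sub_ne_zero.2 hne)
  have main : 2 * (sp * s1p) < (p * (1 - q) + (1 - p) * q) / (sq * s1q) := by
    rw [lt_div_iff₀ (by positivity)]
    nlinarith [hsqpos, hsp2, hs1p2, hsq2, hs1q2]
  have hA : p * (1 - s1q / sq) + (1 - p) * (1 - sq / s1q) =
      1 - (p * (1 - q) + (1 - p) * q) / (sq * s1q) := by
    rw [← hs1q2, ← hsq2]
    field_simp
    ring
  have hB : p * (1 - s1p / sp) + (1 - p) * (1 - sp / s1p) = 1 - 2 * (sp * s1p) := by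
    rw [← hs1p2, ← hsp2]
    field_simp
    linear_combination sp * s1p * hsp2 + sp * s1p * hs1p2 + (1 - sp * s1p) * (hsp2 + hs1p2)
  rw [hA, hB]
  linarith

/-- The scoring rule `hs` is proper: for every `p ∈ (0,1)` the expected score
`q ↦ p·hs(q) + (1-p)·hs(1-q)` over `q ∈ [0,1]` is uniquely maximized at `q = p`. -/
theorem hs_proper (p : ℝ) (hp0 : 0 < p) (hp1 : p < 1) :
    ∀ q ∈ Set.Icc (0 : ℝ) 1, q ≠ p →
      (p : EReal) * hs q + ((1 - p : ℝ) : EReal) * hs (1 - q) <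
        (p : EReal) * hs p + ((1 - p : ℝ) : EReal) * hs (1 - p) := by
  intro q hq hqp
  have hp1' : (0:ℝ) < 1 - p := by linarith
  have hRHS : (p : EReal) * hs p + ((1 - p : ℝ) : EReal) * hs (1 - p) =
      ((p * (1 - Real.sqrt ((1 - p) / p)) +
        (1 - p) * (1 - Real.sqrt ((1 - (1 - p)) / (1 - p))) : ℝ) : EReal) := by
    rw [hs_of_pos hp0, hs_of_pos hp1']
    push_cast
    ring_nf
  rcases eq_or_lt_of_le hq.1 with h0 | hq0
  · -- q = 0
    have : hs q = ⊥ := by simp [hs, ← h0]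
    rw [this, EReal.coe_mul_bot_of_pos hp0, hRHS]
    have : (⊥ : EReal) + ((1 - p : ℝ) : EReal) * hs (1 - q) = ⊥ := by
      rw [← h0]
      rw [hs_of_pos (by norm_num : (0:ℝ) < 1 - 0)]
      rw [← EReal.coe_mul, EReal.bot_add]
    rw [this]
    exact EReal.bot_lt_coe _
  rcases eq_or_lt_of_le hq.2 with h1 | hq1
  · -- q = 1
    have : hs (1 - q) = ⊥ := by simp [hs, h1]
    rw [this, EReal.coe_mul_bot_of_pos hp1', hRHS, EReal.add_bot]
    exact EReal.bot_lt_coe _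
  · have hq1' : (0:ℝ) < 1 - q := by linarith
    rw [hs_of_pos hq0, hs_of_pos hq1', hRHS, ← EReal.coe_mul, ← EReal.coe_mul,
      ← EReal.coe_add, EReal.coe_lt_coe_iff]
    exact key_real p hp0 hp1 q hq0 hq1 hqp
end

section
/- For all x ∈ [0,1], the chain of inequalities x²/2 ≤ 1 - √(1-x²) ≤ 1 - H((1+x)/2) ≤ x² ≤ x holds, where H is the binary entropy function. -/
/-- The binary entropy function with logarithm base 2. -/
noncomputable def binaryEntropy : ℝ → ℝ := fun a =>
  a * Real.logb 2 (1 / a) + (1 - a) * Real.logb 2 (1 / (1 - a))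

open Real Set in
private lemma aux_nonneg (f f' f'' : ℝ → ℝ) (c : ℝ) (hc0 : 0 < c) (hc1 : c < 1)
    (hcont : ContinuousOn f (Icc 0 1))
    (hcont' : ContinuousOn f' (Icc 0 c))
    (hd1 : ∀ x ∈ Ioo (0:ℝ) 1, HasDerivAt f (f' x) x)
    (hd2 : ∀ x ∈ Ioo (0:ℝ) 1, HasDerivAt f' (f'' x) x)
    (h0 : f 0 = 0) (hf'0 : f' 0 = 0) (h1 : f 1 = 0)
    (hconv : ∀ x ∈ Ioo (0:ℝ) c, 0 ≤ f'' x)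
    (hconc : ∀ x ∈ Ioo c 1, f'' x ≤ 0) :
    ∀ x ∈ Icc (0:ℝ) 1, 0 ≤ f x := by
  have hsub1 : Ioo (0:ℝ) c ⊆ Ioo 0 1 := Ioo_subset_Ioo le_rfl hc1.le
  have hsub2 : Ioo c 1 ⊆ Ioo (0:ℝ) 1 := Ioo_subset_Ioo hc0.le le_rfl
  have hm1 : MonotoneOn f' (Icc 0 c) := by
    apply monotoneOn_of_hasDerivWithinAt_nonneg (convex_Icc 0 c) hcont' (f' := f'')
    · intro x hx
      rw [interior_Icc] at hx ⊢
      exact (hd2 x (hsub1 hx)).hasDerivWithinAt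
    · intro x hx
      rw [interior_Icc] at hx
      exact hconv x hx
  have hf'nn : ∀ x ∈ Icc (0:ℝ) c, 0 ≤ f' x := fun x hx => by
    have := hm1 (left_mem_Icc.2 hc0.le) hx hx.1
    rwa [hf'0] at this
  have hm2 : MonotoneOn f (Icc 0 c) := by
    apply monotoneOn_of_hasDerivWithinAt_nonneg (convex_Icc 0 c)
      (hcont.mono (Icc_subset_Icc le_rfl hc1.le)) (f' := f')
    · intro x hx
      rw [interior_Icc] at hx ⊢
      exact (hd1 x (hsub1 hx)).hasDerivWithinAt
    · intro x hx
      rw [interior_Icc] at hx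
      exact hf'nn x (Ioo_subset_Icc_self hx)
  have hpos1 : ∀ x ∈ Icc (0:ℝ) c, 0 ≤ f x := fun x hx => by
    have := hm2 (left_mem_Icc.2 hc0.le) hx hx.1
    rwa [h0] at this
  have hconcave : ConcaveOn ℝ (Icc c 1) f := by
    apply concaveOn_of_hasDerivWithinAt2_nonpos (convex_Icc c 1)
      (hcont.mono (Icc_subset_Icc hc0.le le_rfl)) (f' := f') (f'' := f'')
    · intro x hx; rw [interior_Icc] at hx ⊢
      exact (hd1 x (hsub2 hx)).hasDerivWithinAt
    · intro x hx; rw [interior_Icc] at hx ⊢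
      exact (hd2 x (hsub2 hx)).hasDerivWithinAt
    · intro x hx; rw [interior_Icc] at hx; exact hconc x hx
  intro x hx
  rcases le_or_gt x c with h | h
  · exact hpos1 x ⟨hx.1, h⟩
  · have hden : (0:ℝ) < 1 - c := by linarith
    have ha : 0 ≤ (1 - x)/(1 - c) := by
      apply div_nonneg <;> linarith [hx.2]
    have hb : 0 ≤ (x - c)/(1 - c) := by
      apply div_nonneg <;> linarith
    have hab : (1 - x)/(1 - c) + (x - c)/(1 - c) = 1 := by field_simp; ring
    have hcc := hconcave.2 (left_mem_Icc.2 (by linarith : c ≤ 1))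
      (right_mem_Icc.2 (by linarith : c ≤ 1)) ha hb hab
    have hx' : ((1 - x)/(1 - c)) • c + ((x - c)/(1 - c)) • (1:ℝ) = x := by
      simp only [smul_eq_mul]; field_simp; ring
    rw [hx'] at hcc
    refine le_trans ?_ hcc
    have hfc := hpos1 c (right_mem_Icc.2 hc0.le)
    rw [h1]
    simp only [smul_eq_mul, mul_zero, add_zero]
    positivity

/-- `G x = (1+x)·ln(1+x) + (1-x)·ln(1-x)`. -/
noncomputable def Gfun (x : ℝ) : ℝ := (1+x) * Real.log (1+x) + (1-x) * Real.log (1-x)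

private lemma hasDerivAt_Gfun {x : ℝ} (h1 : -1 < x) (h2 : x < 1) :
    HasDerivAt Gfun (Real.log (1+x) - Real.log (1-x)) x := by
  have hx1 : (0:ℝ) < 1 + x := by linarith
  have hx2 : (0:ℝ) < 1 - x := by linarith
  have d1 : HasDerivAt (fun y : ℝ => 1 + y) 1 x := by
    simpa using (hasDerivAt_id x).const_add 1
  have d2 : HasDerivAt (fun y : ℝ => 1 - y) (-1) x := by
    simpa using (hasDerivAt_id x).const_sub 1
  have l1 : HasDerivAt (fun y : ℝ => Real.log (1+y)) (1/(1+x)) x := by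
    simpa using d1.log hx1.ne'
  have l2 : HasDerivAt (fun y : ℝ => Real.log (1-y)) (-1/(1-x)) x := by
    simpa using d2.log hx2.ne'
  have h := (d1.mul l1).add (d2.mul l2)
  refine h.congr_deriv ?_
  field_simp
  ring

private lemma continuous_Gfun : Continuous Gfun := by
  have h1 : Continuous fun x : ℝ => (1+x) * Real.log (1+x) :=
    Real.continuous_mul_log.comp (continuous_const.add continuous_id)
  have h2 : Continuous fun x : ℝ => (1-x) * Real.log (1-x) :=
    Real.continuous_mul_log.comp (continuous_const.sub continuous_id)
  exact h1.add h2

noncomputable def phiF (x : ℝ) : ℝ := 2 * Real.log 2 * x^2 - Gfun x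
noncomputable def phiF' (x : ℝ) : ℝ :=
  4 * Real.log 2 * x - (Real.log (1+x) - Real.log (1-x))
noncomputable def phiF'' (x : ℝ) : ℝ := 4 * Real.log 2 - 2/(1-x^2)

private lemma hasDerivAt_phiF {x : ℝ} (h1 : -1 < x) (h2 : x < 1) :
    HasDerivAt phiF (phiF' x) x := by
  have dsq : HasDerivAt (fun y : ℝ => 2 * Real.log 2 * y^2) (2 * Real.log 2 * (2*x)) x := by
    simpa using ((hasDerivAt_pow 2 x)).const_mul (2 * Real.log 2)
  have h := dsq.sub (hasDerivAt_Gfun h1 h2)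
  refine h.congr_deriv ?_
  unfold phiF'
  ring

private lemma hasDerivAt_phiF' {x : ℝ} (h1 : -1 < x) (h2 : x < 1) :
    HasDerivAt phiF' (phiF'' x) x := by
  have hx1 : (0:ℝ) < 1 + x := by linarith
  have hx2 : (0:ℝ) < 1 - x := by linarith
  have d1 : HasDerivAt (fun y : ℝ => 1 + y) 1 x := by
    simpa using (hasDerivAt_id x).const_add 1
  have d2 : HasDerivAt (fun y : ℝ => 1 - y) (-1) x := by
    simpa using (hasDerivAt_id x).const_sub 1
  have l1 : HasDerivAt (fun y : ℝ => Real.log (1+y)) (1/(1+x)) x := by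
    simpa using d1.log hx1.ne'
  have l2 : HasDerivAt (fun y : ℝ => Real.log (1-y)) (-1/(1-x)) x := by
    simpa using d2.log hx2.ne'
  have dlin : HasDerivAt (fun y : ℝ => 4 * Real.log 2 * y) (4 * Real.log 2) x := by
    simpa using (hasDerivAt_id x).const_mul (4 * Real.log 2)
  have h := dlin.sub (l1.sub l2)
  refine h.congr_deriv ?_
  unfold phiF''
  have : (1:ℝ)/(1+x) - (-1/(1-x)) = 2/(1-x^2) := by
    rw [div_sub_div _ _ hx1.ne' hx2.ne']
    congr 1 <;> ring
  rw [this]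

noncomputable def psiF (x : ℝ) : ℝ :=
  Gfun x - 2 * Real.log 2 * (1 - Real.sqrt (1 - x^2))
noncomputable def psiF' (x : ℝ) : ℝ :=
  (Real.log (1+x) - Real.log (1-x)) - 2 * Real.log 2 * (x / Real.sqrt (1 - x^2))
noncomputable def psiF'' (x : ℝ) : ℝ :=
  2/(1-x^2) - 2 * Real.log 2 / (Real.sqrt (1 - x^2))^3

private lemma hasDerivAt_sqrt_one_sub_sq {x : ℝ} (h1 : -1 < x) (h2 : x < 1) :
    HasDerivAt (fun y : ℝ => Real.sqrt (1 - y^2)) (-(x / Real.sqrt (1 - x^2))) x := by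
  have hpos : (0:ℝ) < 1 - x^2 := by nlinarith
  have q : HasDerivAt (fun y : ℝ => 1 - y^2) (-(2*x)) x := by
    simpa using (hasDerivAt_pow 2 x).const_sub 1
  have h := q.sqrt hpos.ne'
  refine h.congr_deriv ?_
  have hs : (0:ℝ) < Real.sqrt (1 - x^2) := Real.sqrt_pos.2 hpos
  field_simp

private lemma hasDerivAt_psiF {x : ℝ} (h1 : -1 < x) (h2 : x < 1) :
    HasDerivAt psiF (psiF' x) x := by
  have h := (hasDerivAt_Gfun h1 h2).sub
    (((hasDerivAt_sqrt_one_sub_sq h1 h2).const_sub 1).const_mul (2 * Real.log 2))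
  refine h.congr_deriv ?_
  unfold psiF'
  ring

private lemma hasDerivAt_psiF' {x : ℝ} (h1 : -1 < x) (h2 : x < 1) :
    HasDerivAt psiF' (psiF'' x) x := by
  have hpos : (0:ℝ) < 1 - x^2 := by nlinarith
  have hs : (0:ℝ) < Real.sqrt (1 - x^2) := Real.sqrt_pos.2 hpos
  have hs2 : (Real.sqrt (1 - x^2))^2 = 1 - x^2 := Real.sq_sqrt hpos.le
  have hx1 : (0:ℝ) < 1 + x := by linarith
  have hx2 : (0:ℝ) < 1 - x := by linarith
  have d1 : HasDerivAt (fun y : ℝ => 1 + y) 1 x := by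
    simpa using (hasDerivAt_id x).const_add 1
  have d2 : HasDerivAt (fun y : ℝ => 1 - y) (-1) x := by
    simpa using (hasDerivAt_id x).const_sub 1
  have l1 : HasDerivAt (fun y : ℝ => Real.log (1+y)) (1/(1+x)) x := by
    simpa using d1.log hx1.ne'
  have l2 : HasDerivAt (fun y : ℝ => Real.log (1-y)) (-1/(1-x)) x := by
    simpa using d2.log hx2.ne'
  have dq : HasDerivAt (fun y : ℝ => y / Real.sqrt (1 - y^2))
      ((1 * Real.sqrt (1 - x^2) - x * (-(x / Real.sqrt (1 - x^2)))) / (Real.sqrt (1 - x^2))^2) x :=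
    (hasDerivAt_id x).div (hasDerivAt_sqrt_one_sub_sq h1 h2) hs.ne'
  have h := (l1.sub l2).sub (dq.const_mul (2 * Real.log 2))
  refine h.congr_deriv ?_
  unfold psiF''
  have e1 : (1:ℝ)/(1+x) - (-1/(1-x)) = 2/(1-x^2) := by
    rw [div_sub_div _ _ hx1.ne' hx2.ne']
    congr 1 <;> ring
  have e2 : (1 * Real.sqrt (1 - x^2) - x * (-(x / Real.sqrt (1 - x^2)))) / (Real.sqrt (1 - x^2))^2
      = 1 / (Real.sqrt (1 - x^2))^3 := by
    rw [div_eq_div_iff (by positivity) (by positivity)]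
    field_simp
    nlinarith [hs2, hs]
  rw [e1, e2]
  field_simp

open Real Set in
private lemma phiF_nonneg : ∀ x ∈ Icc (0:ℝ) 1, 0 ≤ phiF x := by
  have hL : (0.6931471803:ℝ) < Real.log 2 := Real.log_two_gt_d9
  have hL' : Real.log 2 < 0.6931471808 := Real.log_two_lt_d9
  set a := Real.sqrt (1 - 1/(2*Real.log 2)) with ha_def
  have harg : (0:ℝ) < 1 - 1/(2*Real.log 2) := by
    rw [sub_pos, div_lt_one (by linarith)]; linarith
  have ha2 : a^2 = 1 - 1/(2*Real.log 2) := Real.sq_sqrt harg.le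
  have ha0 : 0 < a := Real.sqrt_pos.2 harg
  have hdiv : 1/(2*Real.log 2) > 0 := by positivity
  have ha1 : a < 1 := by nlinarith [ha2, ha0]
  have hkey : 2 * Real.log 2 * (1 - a^2) = 1 := by
    rw [ha2]; field_simp; ring
  apply aux_nonneg phiF phiF' phiF'' a ha0 ha1
  · exact ((continuous_const.mul (continuous_pow 2)).sub continuous_Gfun).continuousOn
  · apply ContinuousOn.sub (by fun_prop)
    apply ContinuousOn.sub
    · exact ContinuousOn.log (by fun_prop) (fun x hx => by
        have := hx.1; intro h; nlinarith)
    · exact ContinuousOn.log (by fun_prop) (fun x hx => by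
        have := hx.2; intro h; nlinarith [ha1])
  · exact fun x hx => hasDerivAt_phiF (by linarith [hx.1]) hx.2
  · exact fun x hx => hasDerivAt_phiF' (by linarith [hx.1]) hx.2
  · simp [phiF, Gfun]
  · simp [phiF']
  · have h1 : Real.log (1-1) = 0 := by norm_num
    simp only [phiF, Gfun]
    norm_num
  · intro x hx
    have hxa : x^2 < a^2 := by nlinarith [hx.1, hx.2]
    have hpos : (0:ℝ) < 1 - x^2 := by nlinarith [ha1, hx.1]
    have hmul : 2 ≤ 4 * Real.log 2 * (1 - x^2) := by nlinarith [hkey, hxa]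
    unfold phiF''
    rw [sub_nonneg, div_le_iff₀ hpos]
    linarith
  · intro x hx
    have hxa : a^2 < x^2 := by nlinarith [hx.1, ha0]
    have hpos : (0:ℝ) < 1 - x^2 := by nlinarith [hx.2, hx.1, ha0]
    have hmul : 4 * Real.log 2 * (1 - x^2) ≤ 2 := by nlinarith [hkey, hxa]
    unfold phiF''
    rw [sub_nonpos, le_div_iff₀ hpos]
    linarith

open Real Set in
private lemma psiF_nonneg : ∀ x ∈ Icc (0:ℝ) 1, 0 ≤ psiF x := by
  have hL : (0.6931471803:ℝ) < Real.log 2 := Real.log_two_gt_d9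
  have hL' : Real.log 2 < 0.6931471808 := Real.log_two_lt_d9
  set b := Real.sqrt (1 - (Real.log 2)^2) with hb_def
  have harg : (0:ℝ) < 1 - (Real.log 2)^2 := by nlinarith
  have hb2 : b^2 = 1 - (Real.log 2)^2 := Real.sq_sqrt harg.le
  have hb0 : 0 < b := Real.sqrt_pos.2 harg
  have hb1 : b < 1 := by nlinarith [hb2, hb0]
  apply aux_nonneg psiF psiF' psiF'' b hb0 hb1
  · apply ContinuousOn.sub continuous_Gfun.continuousOn
    apply ContinuousOn.mul continuousOn_const
    apply ContinuousOn.sub continuousOn_const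
    exact (Real.continuous_sqrt.comp (by fun_prop)).continuousOn
  · apply ContinuousOn.sub
    · apply ContinuousOn.sub
      · exact ContinuousOn.log (by fun_prop) (fun x hx => by
          have := hx.1; intro h; nlinarith)
      · exact ContinuousOn.log (by fun_prop) (fun x hx => by
          have := hx.2; intro h; nlinarith [hb1])
    · apply ContinuousOn.mul continuousOn_const
      apply ContinuousOn.div continuousOn_id
      · exact (Real.continuous_sqrt.comp (by fun_prop)).continuousOn
      · intro x hx
        have h1 : x^2 < 1 := by nlinarith [hx.1, hx.2, hb1]
        have : (0:ℝ) < 1 - x^2 := by linarith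
        exact (Real.sqrt_pos.2 this).ne'
  · exact fun x hx => hasDerivAt_psiF (by linarith [hx.1]) hx.2
  · exact fun x hx => hasDerivAt_psiF' (by linarith [hx.1]) hx.2
  · simp [psiF, Gfun]
  · simp [psiF']
  · have h1 : Real.log (1-1) = 0 := by norm_num
    simp only [psiF, Gfun]
    norm_num
  · intro x hx
    have hpos : (0:ℝ) < 1 - x^2 := by nlinarith [hx.1, hx.2, hb1]
    set s := Real.sqrt (1 - x^2) with hs_def
    have hs : (0:ℝ) < s := Real.sqrt_pos.2 hpos
    have hs2 : s^2 = 1 - x^2 := Real.sq_sqrt hpos.le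
    have hxb : x^2 < b^2 := by nlinarith [hx.1, hx.2]
    have hsL : Real.log 2 < s := by nlinarith [hs2, hb2, hs]
    unfold psiF''
    rw [sub_nonneg, div_le_div_iff₀ (by positivity) hpos]
    nlinarith [hs2, mul_lt_mul_of_pos_right hsL (mul_pos hs hs)]
  · intro x hx
    have hpos : (0:ℝ) < 1 - x^2 := by nlinarith [hx.2, hx.1, hb0]
    set s := Real.sqrt (1 - x^2) with hs_def
    have hs : (0:ℝ) < s := Real.sqrt_pos.2 hpos
    have hs2 : s^2 = 1 - x^2 := Real.sq_sqrt hpos.le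
    have hxb : b^2 < x^2 := by nlinarith [hx.1, hb0]
    have hsL : s < Real.log 2 := by nlinarith [hs2, hb2, hs, hL]
    unfold psiF''
    rw [sub_nonpos, div_le_div_iff₀ hpos (by positivity)]
    nlinarith [hs2, mul_lt_mul_of_pos_right hsL (mul_pos hs hs)]

private lemma binaryEntropy_eq {x : ℝ} (h0 : 0 ≤ x) (h1 : x ≤ 1) :
    binaryEntropy ((1+x)/2) = 1 - Gfun x / (2 * Real.log 2) := by
  have hlog2 : (0:ℝ) < Real.log 2 := Real.log_pos (by norm_num)
  rcases h1.eq_or_lt with h | h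
  · subst h
    have : Real.log (1-1) = 0 := by norm_num
    simp only [binaryEntropy, Gfun]
    norm_num [Real.logb]
  · have hx1 : (0:ℝ) < 1 + x := by linarith
    have hx2 : (0:ℝ) < 1 - x := by linarith
    unfold binaryEntropy Gfun
    rw [Real.logb, Real.logb, one_div, one_div, Real.log_inv, Real.log_inv]
    have e2 : (1 : ℝ) - (1+x)/2 = (1-x)/2 := by ring
    rw [e2, Real.log_div hx1.ne' two_ne_zero, Real.log_div hx2.ne' two_ne_zero]
    field_simp
    ring

/-- For all `x ∈ [0,1]`:
`x²/2 ≤ 1 - √(1-x²) ≤ 1 - H((1+x)/2) ≤ x² ≤ x`. -/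
theorem entropy_chain_inequalities (x : ℝ) (hx : x ∈ Set.Icc (0 : ℝ) 1) :
    x ^ 2 / 2 ≤ 1 - Real.sqrt (1 - x ^ 2) ∧
    1 - Real.sqrt (1 - x ^ 2) ≤ 1 - binaryEntropy ((1 + x) / 2) ∧
    1 - binaryEntropy ((1 + x) / 2) ≤ x ^ 2 ∧
    x ^ 2 ≤ x := by
  obtain ⟨hx0, hx1⟩ := hx
  have hlog2 : (0:ℝ) < Real.log 2 := Real.log_pos (by norm_num)
  have hbe : binaryEntropy ((1 + x) / 2) = 1 - Gfun x / (2 * Real.log 2) :=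
    binaryEntropy_eq hx0 hx1
  have hphi := phiF_nonneg x ⟨hx0, hx1⟩
  have hpsi := psiF_nonneg x ⟨hx0, hx1⟩
  unfold phiF at hphi
  unfold psiF at hpsi
  refine ⟨?_, ?_, ?_, ?_⟩
  · have hsq : Real.sqrt (1 - x^2) ≤ 1 - x^2/2 := by
      rw [show (1 - x^2/2 : ℝ) = Real.sqrt ((1-x^2/2)^2) from
        (Real.sqrt_sq (by nlinarith)).symm]
      apply Real.sqrt_le_sqrt
      nlinarith
    linarith
  · rw [hbe]
    have h2L : (0:ℝ) < 2 * Real.log 2 := by linarith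
    rw [sub_sub_cancel, le_div_iff₀ h2L]
    nlinarith [hpsi]
  · rw [hbe]
    rw [sub_sub_cancel, div_le_iff₀ (by linarith : (0:ℝ) < 2 * Real.log 2)]
    nlinarith [hphi]
  · nlinarith [hx0, hx1]
end

section
/- For all x ∈ [0,1], we have 1 - H((1+x)/2) ≤ (1 - √(1-x²))/ln 2 and x² ≤ (ln 4)·(1 - H((1+x)/2)), where H is the binary entropy function with logarithm base 2. -/
lemma aux_nonneg_of_deriv (g g' : ℝ → ℝ) (hc : ContinuousOn g (Set.Ico 0 1))
    (hd : ∀ t ∈ Set.Ioo (0:ℝ) 1, HasDerivAt g (g' t) t)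
    (h0 : ∀ t ∈ Set.Ioo (0:ℝ) 1, 0 ≤ g' t) (hg0 : g 0 = 0) :
    ∀ x ∈ Set.Ico (0:ℝ) 1, 0 ≤ g x := by
  intro x hx
  have hmono : MonotoneOn g (Set.Ico 0 1) := by
    apply monotoneOn_of_deriv_nonneg (convex_Ico 0 1) hc
    · intro t ht
      rw [interior_Ico] at ht
      exact (hd t ht).differentiableAt.differentiableWithinAt
    · intro t ht
      rw [interior_Ico] at ht
      rw [(hd t ht).deriv]
      exact h0 t ht
  have := hmono ⟨le_refl 0, by norm_num⟩ hx hx.1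
  rwa [hg0] at this

lemma aux_log_add (t : ℝ) (h : (0:ℝ) < 1 + t) :
    HasDerivAt (fun t : ℝ => Real.log (1+t)) (1/(1+t)) t := by
  have h1 : HasDerivAt (fun t : ℝ => 1+t) 1 t := (hasDerivAt_id t).const_add 1
  simpa using h1.log (ne_of_gt h)

lemma aux_log_sub (t : ℝ) (h : (0:ℝ) < 1 - t) :
    HasDerivAt (fun t : ℝ => Real.log (1-t)) (-(1/(1-t))) t := by
  have h1 : HasDerivAt (fun t : ℝ => 1-t) (-1) t := (hasDerivAt_id t).const_sub 1
  have := h1.log (ne_of_gt h)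
  convert this using 1
  field_simp

lemma aux_A : ∀ x ∈ Set.Ico (0:ℝ) 1, 0 ≤ Real.log (1+x) - Real.log (1-x) - 2*x := by
  apply aux_nonneg_of_deriv _ (fun t => 1/(1+t) + 1/(1-t) - 2)
  · apply ContinuousOn.sub
    apply ContinuousOn.sub
    · exact (Real.continuousOn_log.comp (by fun_prop) (fun t ht => by
        simp only [Set.mem_Ico] at ht; intro h; simp at h; nlinarith [ht.1]))
    · exact (Real.continuousOn_log.comp (by fun_prop) (fun t ht => by
        simp only [Set.mem_Ico] at ht; intro h; simp at h; nlinarith [ht.2]))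
    · fun_prop
  · intro t ht
    simp only [Set.mem_Ioo] at ht
    have h1 : (0:ℝ) < 1 + t := by linarith [ht.1]
    have h2 : (0:ℝ) < 1 - t := by linarith [ht.2]
    have := ((aux_log_add t h1).sub (aux_log_sub t h2)).sub
      ((hasDerivAt_id t).const_mul 2)
    refine this.congr_deriv (Eq.symm ?_)
    ring
  · intro t ht
    simp only [Set.mem_Ioo] at ht
    have h1 : (0:ℝ) < 1 + t := by linarith [ht.1]
    have h2 : (0:ℝ) < 1 - t := by linarith [ht.2]
    have key : 1/(1+t) + 1/(1-t) - 2 = 2*t^2/((1+t)*(1-t)) := by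
      field_simp; ring
    rw [key]; positivity
  · simp

lemma aux_sqrt_deriv (t : ℝ) (h1 : (0:ℝ) < 1 + t) (h2 : (0:ℝ) < 1 - t) :
    HasDerivAt (fun t : ℝ => Real.sqrt (1 - t^2)) (-t / Real.sqrt (1 - t^2)) t := by
  have hpos : (0:ℝ) < 1 - t^2 := by nlinarith
  have hs : (0:ℝ) < Real.sqrt (1 - t^2) := Real.sqrt_pos.mpr hpos
  have hin : HasDerivAt (fun t : ℝ => 1 - t^2) (-(2*t)) t := by
    simpa using (hasDerivAt_pow 2 t).const_sub 1
  have := hin.sqrt (ne_of_gt hpos)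
  convert this using 1
  field_simp

lemma aux_ratio_deriv (t : ℝ) (h1 : (0:ℝ) < 1 + t) (h2 : (0:ℝ) < 1 - t) :
    HasDerivAt (fun t : ℝ => 2*t / Real.sqrt (1 - t^2))
      (2 / (Real.sqrt (1 - t^2))^3) t := by
  have hpos : (0:ℝ) < 1 - t^2 := by nlinarith
  have hs : (0:ℝ) < Real.sqrt (1 - t^2) := Real.sqrt_pos.mpr hpos
  have hsq : (Real.sqrt (1 - t^2))^2 = 1 - t^2 := Real.sq_sqrt (le_of_lt hpos)
  have hnum : HasDerivAt (fun t : ℝ => 2*t) 2 t := by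
    simpa using (hasDerivAt_id t).const_mul 2
  have := hnum.div (aux_sqrt_deriv t h1 h2) (ne_of_gt hs)
  refine this.congr_deriv (Eq.symm ?_)
  have e1 : 2*Real.sqrt (1-t^2) - 2*t*(-t/Real.sqrt (1-t^2))
      = 2/Real.sqrt (1-t^2) := by
    field_simp
    nlinarith [hsq]
  rw [e1, div_div]
  congr 1
  ring

lemma aux_cont_sqrt : ContinuousOn (fun t : ℝ => Real.sqrt (1 - t^2)) (Set.Ico 0 1) := by
  fun_prop

lemma aux_cont_log_add : ContinuousOn (fun t : ℝ => Real.log (1+t)) (Set.Ico 0 1) :=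
  Real.continuousOn_log.comp (by fun_prop) (fun t ht => by
    simp only [Set.mem_Ico] at ht; intro h; simp at h; nlinarith [ht.1])

lemma aux_cont_log_sub : ContinuousOn (fun t : ℝ => Real.log (1-t)) (Set.Ico 0 1) :=
  Real.continuousOn_log.comp (by fun_prop) (fun t ht => by
    simp only [Set.mem_Ico] at ht; intro h; simp at h; nlinarith [ht.2])

lemma aux_sqrt_ne (t : ℝ) (ht : t ∈ Set.Ico (0:ℝ) 1) : Real.sqrt (1 - t^2) ≠ 0 := by
  simp only [Set.mem_Ico] at ht
  have : (0:ℝ) < 1 - t^2 := by nlinarith [ht.1, ht.2]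
  positivity

lemma aux_B : ∀ x ∈ Set.Ico (0:ℝ) 1,
    0 ≤ 2*x / Real.sqrt (1 - x^2) - (Real.log (1+x) - Real.log (1-x)) := by
  apply aux_nonneg_of_deriv _
    (fun t => 2 / (Real.sqrt (1 - t^2))^3 - (1/(1+t) + 1/(1-t)))
  · exact (((continuousOn_const.mul continuousOn_id).div aux_cont_sqrt aux_sqrt_ne).sub
      (aux_cont_log_add.sub aux_cont_log_sub))
  · intro t ht
    simp only [Set.mem_Ioo] at ht
    have h1 : (0:ℝ) < 1 + t := by linarith [ht.1]
    have h2 : (0:ℝ) < 1 - t := by linarith [ht.2]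
    have := (aux_ratio_deriv t h1 h2).sub ((aux_log_add t h1).sub (aux_log_sub t h2))
    refine this.congr_deriv (Eq.symm ?_)
    ring
  · intro t ht
    simp only [Set.mem_Ioo] at ht
    have h1 : (0:ℝ) < 1 + t := by linarith [ht.1]
    have h2 : (0:ℝ) < 1 - t := by linarith [ht.2]
    have hpos : (0:ℝ) < 1 - t^2 := by nlinarith
    have hs : (0:ℝ) < Real.sqrt (1 - t^2) := Real.sqrt_pos.mpr hpos
    have hsq : (Real.sqrt (1 - t^2))^2 = 1 - t^2 := Real.sq_sqrt (le_of_lt hpos)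
    have hle1 : Real.sqrt (1 - t^2) ≤ 1 := by
      have h := Real.sqrt_le_sqrt (show 1 - t^2 ≤ 1 by nlinarith)
      rwa [Real.sqrt_one] at h
    have e2 : 1/(1+t) + 1/(1-t) = 2/(1-t^2) := by
      field_simp
      ring
    rw [e2, sub_nonneg]
    have e3 : 2/(1-t^2) = 2/(Real.sqrt (1-t^2))^2 := by rw [hsq]
    rw [e3]
    apply div_le_div_of_nonneg_left (by norm_num) (by positivity)
    exact pow_le_pow_of_le_one hs.le hle1 (by norm_num)
  · simp

lemma aux_F_deriv (t : ℝ) (h1 : (0:ℝ) < 1 + t) (h2 : (0:ℝ) < 1 - t) :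
    HasDerivAt (fun t : ℝ => (1+t)*Real.log (1+t) + (1-t)*Real.log (1-t))
      (Real.log (1+t) - Real.log (1-t)) t := by
  have ha : HasDerivAt (fun t : ℝ => 1+t) 1 t := (hasDerivAt_id t).const_add 1
  have hb : HasDerivAt (fun t : ℝ => 1-t) (-1) t := (hasDerivAt_id t).const_sub 1
  have := (ha.mul (aux_log_add t h1)).add (hb.mul (aux_log_sub t h2))
  refine this.congr_deriv (Eq.symm ?_)
  field_simp
  ring

lemma aux_cont_F : ContinuousOn
    (fun t : ℝ => (1+t)*Real.log (1+t) + (1-t)*Real.log (1-t)) (Set.Ico 0 1) :=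
  ((by fun_prop : ContinuousOn (fun t:ℝ => 1+t) (Set.Ico 0 1)).mul aux_cont_log_add).add
    ((by fun_prop : ContinuousOn (fun t:ℝ => 1-t) (Set.Ico 0 1)).mul aux_cont_log_sub)

-- L3 on [0,1)
lemma aux_L3 : ∀ x ∈ Set.Ico (0:ℝ) 1,
    x^2 ≤ (1+x)*Real.log (1+x) + (1-x)*Real.log (1-x) := by
  have := aux_nonneg_of_deriv
    (fun t => (1+t)*Real.log (1+t) + (1-t)*Real.log (1-t) - t^2)
    (fun t => (Real.log (1+t) - Real.log (1-t)) - 2*t)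
    (aux_cont_F.sub (by fun_prop))
    (fun t ht => by
      simp only [Set.mem_Ioo] at ht
      have h1 : (0:ℝ) < 1 + t := by linarith [ht.1]
      have h2 : (0:ℝ) < 1 - t := by linarith [ht.2]
      have := (aux_F_deriv t h1 h2).sub (hasDerivAt_pow 2 t)
      refine this.congr_deriv (Eq.symm ?_)
      ring)
    (fun t ht => aux_A t (Set.Ioo_subset_Ico_self ht))
    (by simp)
  intro x hx
  have h := this x hx
  linarith

-- L2 on [0,1)
lemma aux_L2 : ∀ x ∈ Set.Ico (0:ℝ) 1,
    (1+x)*Real.log (1+x) + (1-x)*Real.log (1-x) ≤ 2 - 2*Real.sqrt (1 - x^2) := by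
  have := aux_nonneg_of_deriv
    (fun t => 2 - 2*Real.sqrt (1 - t^2) - ((1+t)*Real.log (1+t) + (1-t)*Real.log (1-t)))
    (fun t => 2*t / Real.sqrt (1 - t^2) - (Real.log (1+t) - Real.log (1-t)))
    ((continuousOn_const.sub (continuousOn_const.mul aux_cont_sqrt)).sub aux_cont_F)
    (fun t ht => by
      simp only [Set.mem_Ioo] at ht
      have h1 : (0:ℝ) < 1 + t := by linarith [ht.1]
      have h2 : (0:ℝ) < 1 - t := by linarith [ht.2]
      have hs : (0:ℝ) < Real.sqrt (1 - t^2) := Real.sqrt_pos.mpr (by nlinarith)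
      have := ((hasDerivAt_const t (2:ℝ)).sub
        ((aux_sqrt_deriv t h1 h2).const_mul 2)).sub (aux_F_deriv t h1 h2)
      refine this.congr_deriv (Eq.symm ?_)
      field_simp
      ring)
    (fun t ht => aux_B t (Set.Ioo_subset_Ico_self ht))
    (by simp)
  intro x hx
  have h := this x hx
  linarith

lemma aux_identity (x : ℝ) (hx0 : 0 ≤ x) (hx1 : x < 1) :
    Real.log 2 * (1 - binaryEntropy ((1+x)/2))
      = ((1+x)*Real.log (1+x) + (1-x)*Real.log (1-x))/2 := by
  have h1 : (0:ℝ) < 1 + x := by linarith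
  have h2 : (0:ℝ) < 1 - x := by linarith
  have hl2 : Real.log 2 ≠ 0 := ne_of_gt (Real.log_pos (by norm_num))
  have epq : 1 - (1+x)/2 = (1-x)/2 := by ring
  have e1 : Real.log (1/((1+x)/2)) = Real.log 2 - Real.log (1+x) := by
    rw [one_div, Real.log_inv, Real.log_div (ne_of_gt h1) two_ne_zero]
    ring
  have e2 : Real.log (1/((1-x)/2)) = Real.log 2 - Real.log (1-x) := by
    rw [one_div, Real.log_inv, Real.log_div (ne_of_gt h2) two_ne_zero]
    ring
  simp only [binaryEntropy, Real.logb, epq, e1, e2]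
  field_simp
  ring

/-- For all `x ∈ [0,1]`: `1 - H((1+x)/2) ≤ (1 - √(1-x²))/ln 2` and
`x² ≤ (ln 4)·(1 - H((1+x)/2))`. -/
theorem entropy_tight_inequalities (x : ℝ) (hx : x ∈ Set.Icc (0 : ℝ) 1) :
    1 - binaryEntropy ((1 + x) / 2) ≤ (1 - Real.sqrt (1 - x ^ 2)) / Real.log 2 ∧
    x ^ 2 ≤ Real.log 4 * (1 - binaryEntropy ((1 + x) / 2)) := by
  obtain ⟨hx0, hx1⟩ := hx
  have hlog2 : (0:ℝ) < Real.log 2 := Real.log_pos (by norm_num)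
  have hlog4 : Real.log 4 = 2 * Real.log 2 := by
    rw [show (4:ℝ) = 2^2 by norm_num, Real.log_pow]
    norm_num
  rcases eq_or_lt_of_le hx1 with h1 | h1
  · subst h1
    have hB : binaryEntropy ((1+1)/2) = 0 := by
      norm_num [binaryEntropy]
    rw [hB]
    constructor
    · rw [show (1:ℝ) - 1^2 = 0 by norm_num, Real.sqrt_zero, le_div_iff₀ hlog2]
      have := Real.log_two_lt_d9
      linarith
    · have := Real.log_two_gt_d9
      rw [hlog4]
      nlinarith
  · have hid := aux_identity x hx0 h1
    have hL2 := aux_L2 x ⟨hx0, h1⟩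
    have hL3 := aux_L3 x ⟨hx0, h1⟩
    constructor
    · rw [le_div_iff₀ hlog2]
      nlinarith [hid, hL2]
    · rw [hlog4]
      nlinarith [hid, hL3]
end

section
/- For x ∈ [0,1] and real k ≥ 1, we have (1/2)·min(kx, 1) ≤ 1 - (1-x)^k ≤ min(kx, 1). -/
/-- For `x ∈ [0,1]` and real `k ≥ 1`:
`(1/2)·min(kx, 1) ≤ 1 - (1-x)^k ≤ min(kx, 1)`. -/
theorem amp_inequality (x k : ℝ) (hx : x ∈ Set.Icc (0 : ℝ) 1) (hk : 1 ≤ k) :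
    (1 / 2) * min (k * x) 1 ≤ 1 - (1 - x) ^ k ∧
      1 - (1 - x) ^ k ≤ min (k * x) 1 := by
  obtain ⟨hx0, hx1⟩ := hx
  have h1x0 : (0:ℝ) ≤ 1 - x := by linarith
  have hkx0 : 0 ≤ k * x := mul_nonneg (by linarith) hx0
  have hrpow0 : 0 ≤ (1 - x) ^ k := Real.rpow_nonneg h1x0 k
  -- Bernoulli: 1 - k*x ≤ (1-x)^k
  have hbern : 1 - k * x ≤ (1 - x) ^ k := by
    have := one_add_mul_self_le_rpow_one_add (s := -x) (by linarith) hk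
    simpa [mul_neg, sub_eq_add_neg] using this
  -- key: (1-x)^k ≤ exp(-(k*x))
  have hexp : (1 - x) ^ k ≤ Real.exp (-(k * x)) := by
    have h1 : 1 - x ≤ Real.exp (-x) := by
      have := Real.add_one_le_exp (-x); linarith
    calc (1 - x) ^ k ≤ (Real.exp (-x)) ^ k :=
          Real.rpow_le_rpow h1x0 h1 (by linarith)
      _ = Real.exp (-(k * x)) := by
          rw [← Real.exp_mul]; ring_nf
  have hrecip : Real.exp (-(k * x)) ≤ 1 / (1 + k * x) := by
    rw [Real.exp_neg]
    rw [inv_eq_one_div]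
    apply one_div_le_one_div_of_le (by linarith)
    have := Real.add_one_le_exp (k * x); linarith
  constructor
  · rcases le_total (k * x) 1 with h | h
    · rw [min_eq_left h]
      have h2 : (1 - x) ^ k ≤ 1 - (k * x) / 2 := by
        have h3 : 1 / (1 + k * x) ≤ 1 - (k * x) / 2 := by
          rw [div_le_iff₀ (by linarith)]
          nlinarith
        linarith
      linarith
    · rw [min_eq_right h]
      have h2 : Real.exp (-(k * x)) ≤ Real.exp (-1) := by
        apply Real.exp_le_exp.mpr; linarith
      have h3 : Real.exp (-1) ≤ 1 / 2 := by
        rw [Real.exp_neg, inv_eq_one_div]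
        apply one_div_le_one_div_of_le (by norm_num)
        have := Real.add_one_le_exp 1; linarith
      linarith
  · apply le_min
    · linarith
    · linarith
end

section
/- Let ν be a distribution on a finite set, and for functions φ : S → [0,1], define the hs-score of φ against true label b ∈ {0,1} as the ν-expectation of hs_b(φ(x)), where hs₁(q) = 1-√((1-q)/q) and hs₀(q) = 1-√(q/(1-q)). Given φ with scores η_b = E_{x←ν}[hs_b(φ(x))] for b ∈ {0,1}, both finite, there exists a function φ^(k) : S^k → [0,1] defined by φ^(k)(x₁,…,x_k) = (1 + ∏ᵢ (1-φ(xᵢ))/φ(xᵢ))⁻¹ such that E_{x←ν^{⊗k}}[hs_b(φ^(k)(x))] = 1 - (1 - η_b)^k for each b ∈ {0,1}. -/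
open Finset

/-- The scoring rule `hs` scored against true label `1`. -/
noncomputable def hs1 : ℝ → ℝ := fun q => 1 - Real.sqrt ((1 - q) / q)

/-- The scoring rule `hs` scored against true label `0`. -/
noncomputable def hs0 : ℝ → ℝ := fun q => 1 - Real.sqrt (q / (1 - q))

lemma sqrt_prod' {ι : Type*} (s : Finset ι) (f : ι → ℝ) (h : ∀ i ∈ s, 0 ≤ f i) :
    Real.sqrt (∏ i ∈ s, f i) = ∏ i ∈ s, Real.sqrt (f i) := by
  induction s using Finset.cons_induction with
  | empty => simp
  | cons a s ha ih =>
    rw [Finset.prod_cons, Finset.prod_cons,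
      Real.sqrt_mul (h a (Finset.mem_cons_self a s)),
      ih (fun i hi => h i (Finset.mem_cons_of_mem hi))]

lemma aux_amp {S : Type*} [Fintype S] (k : ℕ)
    (ν : S → ℝ) (hν0 : ∀ x, 0 ≤ ν x) (hν1 : ∑ x, ν x = 1)
    (ψ : S → ℝ) (hψ : ∀ x, 0 < ν x → 0 < ψ x ∧ ψ x < 1) :
    ∑ xs : Fin k → S, (∏ i, ν (xs i)) *
        (1 - Real.sqrt ((∏ i, ψ (xs i)) / (∏ i, (1 - ψ (xs i)))))
      = 1 - (1 - ∑ x, ν x * (1 - Real.sqrt (ψ x / (1 - ψ x)))) ^ k := by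
  have key : ∀ xs : Fin k → S,
      (∏ i, ν (xs i)) * (1 - Real.sqrt ((∏ i, ψ (xs i)) / (∏ i, (1 - ψ (xs i)))))
        = ∏ i, ν (xs i) - ∏ i, (ν (xs i) * Real.sqrt (ψ (xs i) / (1 - ψ (xs i)))) := by
    intro xs
    by_cases h : ∀ i, 0 < ν (xs i)
    · have h1 : ∀ i, 0 < ψ (xs i) := fun i => (hψ _ (h i)).1
      have h2 : ∀ i, 0 < 1 - ψ (xs i) := fun i => by linarith [(hψ _ (h i)).2]
      have e1 : (∏ i, ψ (xs i)) / (∏ i, (1 - ψ (xs i)))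
          = ∏ i, (ψ (xs i) / (1 - ψ (xs i))) := (Finset.prod_div_distrib _ _).symm
      rw [e1, sqrt_prod' _ _ (fun i _ => le_of_lt (div_pos (h1 i) (h2 i))),
        Finset.prod_mul_distrib]
      ring
    · push_neg at h
      obtain ⟨i, hi⟩ := h
      have hz : ν (xs i) = 0 := le_antisymm hi (hν0 _)
      have z1 : (∏ j, ν (xs j)) = 0 := Finset.prod_eq_zero (Finset.mem_univ i) hz
      have z2 : (∏ j, (ν (xs j) * Real.sqrt (ψ (xs j) / (1 - ψ (xs j))))) = 0 :=
        Finset.prod_eq_zero (Finset.mem_univ i) (by rw [hz, zero_mul])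
      rw [z1, z2]; ring
  rw [Finset.sum_congr rfl (fun xs _ => key xs), Finset.sum_sub_distrib,
    ← Fintype.sum_pow ν k,
    ← Fintype.sum_pow (fun a => ν a * Real.sqrt (ψ a / (1 - ψ a))) k, hν1, one_pow]
  have e2 : ∑ x, ν x * (1 - Real.sqrt (ψ x / (1 - ψ x)))
      = 1 - ∑ x, ν x * Real.sqrt (ψ x / (1 - ψ x)) := by
    simp only [mul_sub, mul_one]
    rw [Finset.sum_sub_distrib, hν1]
  rw [e2, sub_sub_cancel]

/-- Linear amplification of the `hs` score: combining `k` independent copies of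
a forecaster `φ` via `φ⁽ᵏ⁾(x₁,…,x_k) = (1 + ∏ᵢ (1-φ(xᵢ))/φ(xᵢ))⁻¹` turns
expected scores `η_b` into expected scores `1 - (1-η_b)^k`.

The hypothesis that `0 < φ x < 1` on the support of `ν` encodes the assumption
that `φ` never takes the values `0` and `1` on the support of `ν`, so that both
expected scores are finite. -/
theorem hs_score_amplification
    {S : Type*} [Fintype S] (k : ℕ)
    (ν : S → ℝ) (hν0 : ∀ x, 0 ≤ ν x) (hν1 : ∑ x, ν x = 1)
    (φ : S → ℝ) (hφ : ∀ x, 0 < ν x → 0 < φ x ∧ φ x < 1) :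
    let φk : (Fin k → S) → ℝ := fun xs => (1 + ∏ i, (1 - φ (xs i)) / φ (xs i))⁻¹
    (∑ xs : Fin k → S, (∏ i, ν (xs i)) * hs0 (φk xs)
        = 1 - (1 - ∑ x, ν x * hs0 (φ x)) ^ k) ∧
    (∑ xs : Fin k → S, (∏ i, ν (xs i)) * hs1 (φk xs)
        = 1 - (1 - ∑ x, ν x * hs1 (φ x)) ^ k) := by
  intro φk
  -- ratio computation in the positive case
  have ratio : ∀ xs : Fin k → S, (∀ i, 0 < ν (xs i)) →
      (φk xs / (1 - φk xs) = (∏ i, φ (xs i)) / (∏ i, (1 - φ (xs i)))) ∧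
      ((1 - φk xs) / φk xs = (∏ i, (1 - φ (xs i))) / (∏ i, φ (xs i))) := by
    intro xs h
    have h1 : ∀ i, 0 < φ (xs i) := fun i => (hφ _ (h i)).1
    have h2 : ∀ i, 0 < 1 - φ (xs i) := fun i => by linarith [(hφ _ (h i)).2]
    set p := ∏ i, φ (xs i) with hp
    set q := ∏ i, (1 - φ (xs i)) with hq
    have hp0 : 0 < p := Finset.prod_pos (fun i _ => h1 i)
    have hq0 : 0 < q := Finset.prod_pos (fun i _ => h2 i)
    have e : (∏ i, (1 - φ (xs i)) / φ (xs i)) = q / p := Finset.prod_div_distrib _ _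
    have hpq : p + q ≠ 0 := by positivity
    have hφk : φk xs = p / (p + q) := by
      show (1 + ∏ i, (1 - φ (xs i)) / φ (xs i))⁻¹ = p / (p + q)
      rw [e]
      field_simp
    have h1φk : 1 - φk xs = q / (p + q) := by
      rw [hφk]; field_simp; ring
    constructor
    · rw [h1φk, hφk]; field_simp
    · rw [h1φk, hφk]; field_simp
  constructor
  · have := aux_amp k ν hν0 hν1 φ hφ
    simp only [hs0]
    rw [← this]
    apply Finset.sum_congr rfl
    intro xs _
    by_cases h : ∀ i, 0 < ν (xs i)
    · rw [(ratio xs h).1]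
    · push_neg at h
      obtain ⟨i, hi⟩ := h
      have hz : ν (xs i) = 0 := le_antisymm hi (hν0 _)
      have z1 : (∏ j, ν (xs j)) = 0 := Finset.prod_eq_zero (Finset.mem_univ i) hz
      rw [z1, zero_mul, zero_mul]
  · have := aux_amp k ν hν0 hν1 (fun x => 1 - φ x)
      (fun x hx => ⟨show (0:ℝ) < 1 - φ x by linarith [(hφ x hx).2],
        show (1:ℝ) - φ x < 1 by linarith [(hφ x hx).1]⟩)
    simp only [sub_sub_cancel] at this
    simp only [hs1]
    rw [← this]
    apply Finset.sum_congr rfl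
    intro xs _
    by_cases h : ∀ i, 0 < ν (xs i)
    · rw [(ratio xs h).2]
    · push_neg at h
      obtain ⟨i, hi⟩ := h
      have hz : ν (xs i) = 0 := le_antisymm hi (hν0 _)
      have z1 : (∏ j, ν (xs j)) = 0 := Finset.prod_eq_zero (Finset.mem_univ i) hz
      rw [z1, zero_mul, zero_mul]
end

section
/- Suppose a randomized predictor outputs the correct label with probability p ≥ (1+γ)/2 on some input, for γ ∈ (0,1). If the output 1 is replaced with forecast (1+γ)/2 and output 0 with forecast (1-γ)/2, then the expected hs-score p·hs((1+γ)/2) + (1-p)·hs((1-γ)/2) is at least 1 - √(1-γ²), where hs(q) = 1 - √((1-q)/q). In particular it is at least γ²/2. -/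
/-- Converting a biased predictor into a forecaster: if the predictor is
correct with probability `p ≥ (1+γ)/2` and its outputs `1` and `0` are replaced
by the forecasts `(1+γ)/2` and `(1-γ)/2` respectively, then the expected
`hs`-score is at least `1 - √(1-γ²) ≥ γ²/2`. -/
theorem bias_to_hs_score (γ p : ℝ) (hγ0 : 0 < γ) (hγ1 : γ < 1)
    (hp : (1 + γ) / 2 ≤ p) (hp1 : p ≤ 1) :
    1 - Real.sqrt (1 - γ ^ 2) ≤
      p * (1 - Real.sqrt ((1 - γ) / (1 + γ))) +
        (1 - p) * (1 - Real.sqrt ((1 + γ) / (1 - γ))) ∧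
    γ ^ 2 / 2 ≤ 1 - Real.sqrt (1 - γ ^ 2) := by
  have h1 : (0:ℝ) < 1 + γ := by linarith
  have h2 : (0:ℝ) < 1 - γ := by linarith
  have hs2 : Real.sqrt (1 - γ ^ 2) ^ 2 = 1 - γ ^ 2 :=
    Real.sq_sqrt (by nlinarith)
  have hsn : 0 ≤ Real.sqrt (1 - γ ^ 2) := Real.sqrt_nonneg _
  have key1 : Real.sqrt ((1 - γ) / (1 + γ)) * (1 + γ) = Real.sqrt (1 - γ ^ 2) := by
    rw [show (1:ℝ) + γ = Real.sqrt ((1 + γ) ^ 2) from (Real.sqrt_sq h1.le).symm,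
      ← Real.sqrt_mul (by positivity)]
    congr 1
    field_simp
    rw [Real.sqrt_sq h1.le]
    ring
  have key2 : Real.sqrt ((1 + γ) / (1 - γ)) * (1 - γ) = Real.sqrt (1 - γ ^ 2) := by
    rw [show (1:ℝ) - γ = Real.sqrt ((1 - γ) ^ 2) from (Real.sqrt_sq h2.le).symm,
      ← Real.sqrt_mul (by positivity)]
    congr 1
    field_simp
    rw [Real.sqrt_sq h2.le]
    ring
  have ha : Real.sqrt ((1 - γ) / (1 + γ)) = Real.sqrt (1 - γ ^ 2) / (1 + γ) :=
    (eq_div_iff h1.ne').mpr key1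
  have hb : Real.sqrt ((1 + γ) / (1 - γ)) = Real.sqrt (1 - γ ^ 2) / (1 - γ) :=
    (eq_div_iff h2.ne').mpr key2
  constructor
  · have main : p * (Real.sqrt (1 - γ ^ 2) / (1 + γ)) +
        (1 - p) * (Real.sqrt (1 - γ ^ 2) / (1 - γ)) ≤ Real.sqrt (1 - γ ^ 2) := by
      rw [mul_div_assoc', mul_div_assoc', div_add_div _ _ h1.ne' h2.ne',
        div_le_iff₀ (mul_pos h1 h2)]
      nlinarith [mul_nonneg hsn (show 0 ≤ γ * (2 * p - 1 - γ) by nlinarith)]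
    rw [ha, hb]
    nlinarith [main]
  · nlinarith [hs2, hsn, sq_nonneg (γ ^ 2)]
end

section
/- Let ν₀, ν₁ be probability distributions on a finite set S and w ∈ [0,1]; set ν = (1-w)ν₀ + wν₁. Then the maximum over functions φ : S → [0,1] of Σ_x [(1-w)ν₀(x)·hs(1-φ(x)) + wν₁(x)·hs(φ(x))] equals Σ_x ν(x)·(1 - √(1 - R(x)²)), where R(x) = |(1-w)ν₀(x) - wν₁(x)|/ν(x) (with terms where ν(x)=0 omitted) and hs(q) = 1 - √((1-q)/q). -/
open Finset

lemma hs_of_ne (q : ℝ) (hq : q ≠ 0) :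
    hs q = ((1 - Real.sqrt ((1 - q) / q) : ℝ) : EReal) := if_neg hq

lemma hs_zero : hs 0 = ⊥ := if_pos rfl

lemma hs_one : hs 1 = (1 : EReal) := by
  rw [hs_of_ne 1 one_ne_zero]
  norm_num

lemma ereal_coe_sum {α : Type*} (s : Finset α) (f : α → ℝ) :
    ((∑ x ∈ s, f x : ℝ) : EReal) = ∑ x ∈ s, ((f x : ℝ) : EReal) := by
  induction s using Finset.cons_induction with
  | empty => simp
  | cons a s ha ih => rw [Finset.sum_cons, Finset.sum_cons, EReal.coe_add, ih]

lemma amgm (a b s t : ℝ) (ha : 0 ≤ a) (hb : 0 ≤ b) (hs : 0 ≤ s) (ht : 0 ≤ t)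
    (hst : s * t = 1) : 2 * Real.sqrt (a * b) ≤ a * s + b * t := by
  have h1 : Real.sqrt (a * s) * Real.sqrt (b * t) = Real.sqrt (a * b) := by
    rw [← Real.sqrt_mul (mul_nonneg ha hs)]
    congr 1
    linear_combination a * b * hst
  nlinarith [Real.sq_sqrt (mul_nonneg ha hs), Real.sq_sqrt (mul_nonneg hb ht),
    sq_nonneg (Real.sqrt (a * s) - Real.sqrt (b * t))]

lemma target_eq (a b : ℝ) (ha : 0 ≤ a) (hb : 0 ≤ b) (hab : 0 < a + b) :
    (a + b) * (1 - Real.sqrt (1 - (|a - b| / (a + b)) ^ 2))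
      = (a + b) - 2 * Real.sqrt (a * b) := by
  have hne : a + b ≠ 0 := ne_of_gt hab
  have h1 : 1 - (|a - b| / (a + b)) ^ 2 = (2 * Real.sqrt (a * b) / (a + b)) ^ 2 := by
    rw [div_pow, div_pow, sq_abs, mul_pow, Real.sq_sqrt (mul_nonneg ha hb)]
    field_simp
    ring
  rw [h1, Real.sqrt_sq (by positivity)]
  field_simp

/-- Pointwise upper bound. -/
lemma point_le (a b p : ℝ) (ha : 0 ≤ a) (hb : 0 ≤ b) (hp0 : 0 ≤ p) (hp1 : p ≤ 1) :
    (a : EReal) * hs (1 - p) + (b : EReal) * hs p ≤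
      (((a + b) * (1 - Real.sqrt (1 - (|a - b| / (a + b)) ^ 2)) : ℝ) : EReal) := by
  rcases eq_or_lt_of_le (by linarith : (0:ℝ) ≤ a + b) with hab | hab
  · have ha0 : a = 0 := by linarith
    have hb0 : b = 0 := by linarith
    simp [ha0, hb0]
  rcases eq_or_lt_of_le hp0 with hp | hp
  · -- p = 0
    rcases eq_or_lt_of_le hb with hb0 | hb0
    · -- b = 0
      have ha' : 0 < a := by linarith
      rw [← hp, ← hb0, hs_zero, sub_zero, hs_one]
      have key : ((a + 0) * (1 - Real.sqrt (1 - (|a - 0| / (a + 0)) ^ 2)) : ℝ) = a := by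
        rw [sub_zero, add_zero, abs_of_pos ha', div_self (ne_of_gt ha')]
        norm_num
      rw [key]
      simp
    · -- b > 0 : LHS = ⊥
      have h1 : (b : EReal) * hs p = ⊥ := by
        rw [← hp, hs_zero, EReal.mul_bot_of_pos (by exact_mod_cast hb0)]
      rw [h1]
      have h2 : (a : EReal) * hs (1 - p) + ⊥ = ⊥ := by
        rw [← hp, sub_zero, hs_one, mul_one, EReal.add_bot]
      rw [h2]
      exact bot_le
  rcases eq_or_lt_of_le hp1 with hp' | hp'
  · -- p = 1
    rcases eq_or_lt_of_le ha with ha0 | ha0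
    · have hb' : 0 < b := by linarith
      rw [hp', ← ha0, hs_one, sub_self, hs_zero]
      have key : ((0 + b) * (1 - Real.sqrt (1 - (|0 - b| / (0 + b)) ^ 2)) : ℝ) = b := by
        rw [zero_sub, zero_add, abs_neg, abs_of_pos hb', div_self (ne_of_gt hb')]
        norm_num
      rw [key]
      simp
    · have h1 : (a : EReal) * hs (1 - p) = ⊥ := by
        rw [hp', sub_self, hs_zero, EReal.mul_bot_of_pos (by exact_mod_cast ha0)]
      rw [h1]
      have h2 : (⊥ : EReal) + (b : EReal) * hs p = ⊥ := by
        rw [EReal.bot_add]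
      rw [h2]
      exact bot_le
  · -- 0 < p < 1
    have hp1' : (0:ℝ) < 1 - p := by linarith
    rw [hs_of_ne p (ne_of_gt hp), hs_of_ne (1 - p) (ne_of_gt hp1')]
    have harg : (1 - (1 - p)) / (1 - p) = p / (1 - p) := by ring_nf
    rw [harg, ← EReal.coe_mul, ← EReal.coe_mul, ← EReal.coe_add, EReal.coe_le_coe_iff,
      target_eq a b ha hb hab]
    have key : 2 * Real.sqrt (a * b) ≤
        a * Real.sqrt (p / (1 - p)) + b * Real.sqrt ((1 - p) / p) := by
      apply amgm a b _ _ ha hb (Real.sqrt_nonneg _) (Real.sqrt_nonneg _)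
      rw [← Real.sqrt_mul (by positivity)]
      have : p / (1 - p) * ((1 - p) / p) = 1 := by
        field_simp
      rw [this, Real.sqrt_one]
    nlinarith

/-- Pointwise equality at the optimal `φ`. -/
lemma point_eq (a b : ℝ) (ha : 0 ≤ a) (hb : 0 ≤ b) :
    (((a + b) * (1 - Real.sqrt (1 - (|a - b| / (a + b)) ^ 2)) : ℝ) : EReal) =
      (a : EReal) * hs (1 - b / (a + b)) + (b : EReal) * hs (b / (a + b)) := by
  rcases eq_or_lt_of_le (by linarith : (0:ℝ) ≤ a + b) with hab | hab
  · have ha0 : a = 0 := by linarith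
    have hb0 : b = 0 := by linarith
    simp [ha0, hb0]
  have hne : a + b ≠ 0 := ne_of_gt hab
  rcases eq_or_lt_of_le hb with hb0 | hb0
  · -- b = 0
    have ha' : 0 < a := by linarith
    have hp : b / (a + b) = 0 := by rw [← hb0]; simp
    rw [hp, sub_zero, hs_one, hs_zero]
    have key : ((a + b) * (1 - Real.sqrt (1 - (|a - b| / (a + b)) ^ 2)) : ℝ) = a := by
      rw [← hb0, sub_zero, add_zero, abs_of_pos ha', div_self (ne_of_gt ha')]
      norm_num
    rw [key, ← hb0]
    simp
  rcases eq_or_lt_of_le ha with ha0 | ha0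
  · -- a = 0
    have hp : b / (a + b) = 1 := by rw [← ha0, zero_add, div_self (ne_of_gt hb0)]
    rw [hp, sub_self, hs_one, hs_zero]
    have key : ((a + b) * (1 - Real.sqrt (1 - (|a - b| / (a + b)) ^ 2)) : ℝ) = b := by
      rw [← ha0, zero_sub, zero_add, abs_neg, abs_of_pos hb0, div_self (ne_of_gt hb0)]
      norm_num
    rw [key, ← ha0]
    simp
  · -- a > 0, b > 0
    have hane : a ≠ 0 := ne_of_gt ha0
    have hbne : b ≠ 0 := ne_of_gt hb0
    have h1p : 1 - b / (a + b) = a / (a + b) := by field_simp; ring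
    have hpne : b / (a + b) ≠ 0 := by positivity
    have h1pne : a / (a + b) ≠ 0 := by positivity
    rw [h1p, hs_of_ne _ hpne, hs_of_ne _ h1pne]
    have e1 : (1 - a / (a + b)) / (a / (a + b)) = b / a := by
      rw [show 1 - a / (a + b) = b / (a + b) by field_simp; ring]
      field_simp
    have e2 : (1 - b / (a + b)) / (b / (a + b)) = a / b := by
      rw [show 1 - b / (a + b) = a / (a + b) by field_simp; ring]
      field_simp
    rw [e1, e2, ← EReal.coe_mul, ← EReal.coe_mul, ← EReal.coe_add, EReal.coe_eq_coe_iff,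
      target_eq a b ha hb hab]
    have s1 : a * Real.sqrt (b / a) = Real.sqrt (a * b) := by
      nth_rewrite 1 [← Real.sqrt_sq ha]
      rw [← Real.sqrt_mul (sq_nonneg a)]
      congr 1
      field_simp
    have s2 : b * Real.sqrt (a / b) = Real.sqrt (a * b) := by
      nth_rewrite 1 [← Real.sqrt_sq hb]
      rw [← Real.sqrt_mul (sq_nonneg b)]
      congr 1
      field_simp
    nlinarith [s1, s2]

/-- The best achievable expected `hs` score for predicting
`b ← Bernoulli(w)` from a sample of `ν_b` equals the weighted squared Hellinger
distance `∑ₓ ν(x)·(1 - √(1 - R(x)²))`, where `ν = (1-w)ν₀ + wν₁` and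
`R(x) = |(1-w)ν₀(x) - wν₁(x)|/ν(x)`. -/
theorem max_hs_score_eq_weighted_hellinger
    {S : Type*} [Fintype S]
    (ν₀ ν₁ : S → ℝ) (w : ℝ)
    (h00 : ∀ x, 0 ≤ ν₀ x) (h10 : ∀ x, 0 ≤ ν₁ x)
    (h01 : ∑ x, ν₀ x = 1) (h11 : ∑ x, ν₁ x = 1)
    (hw : w ∈ Set.Icc (0 : ℝ) 1) :
    IsGreatest
      {e : EReal | ∃ φ : S → ℝ, (∀ x, φ x ∈ Set.Icc (0 : ℝ) 1) ∧
        e = ∑ x, ((((1 - w) * ν₀ x : ℝ) : EReal) * hs (1 - φ x) +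
                  (((w * ν₁ x : ℝ)) : EReal) * hs (φ x))}
      (((∑ x, ((1 - w) * ν₀ x + w * ν₁ x) *
          (1 - Real.sqrt (1 -
            (|(1 - w) * ν₀ x - w * ν₁ x| / ((1 - w) * ν₀ x + w * ν₁ x)) ^ 2)) : ℝ) : EReal)) := by
  obtain ⟨hw0, hw1⟩ := hw
  have hA : ∀ x, 0 ≤ (1 - w) * ν₀ x := fun x => mul_nonneg (by linarith) (h00 x)
  have hB : ∀ x, 0 ≤ w * ν₁ x := fun x => mul_nonneg hw0 (h10 x)
  constructor
  · -- membership
    refine ⟨fun x => (w * ν₁ x) / ((1 - w) * ν₀ x + w * ν₁ x), ?_, ?_⟩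
    · intro x
      refine ⟨div_nonneg (hB x) (by linarith [hA x, hB x]), ?_⟩
      show w * ν₁ x / ((1 - w) * ν₀ x + w * ν₁ x) ≤ 1
      rcases eq_or_lt_of_le (by linarith [hA x, hB x] : (0:ℝ) ≤ (1 - w) * ν₀ x + w * ν₁ x)
        with h | h
      · rw [← h]; simp
      · exact div_le_one_of_le₀ (by linarith [hA x]) (le_of_lt h)
    · rw [ereal_coe_sum]
      apply Finset.sum_congr rfl
      intro x _
      exact point_eq _ _ (hA x) (hB x)
  · -- upper bound
    rintro e ⟨φ, hφ, rfl⟩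
    calc ∑ x, ((((1 - w) * ν₀ x : ℝ) : EReal) * hs (1 - φ x) +
            (((w * ν₁ x : ℝ)) : EReal) * hs (φ x))
        ≤ ∑ x, ((((1 - w) * ν₀ x + w * ν₁ x) *
          (1 - Real.sqrt (1 -
            (|(1 - w) * ν₀ x - w * ν₁ x| / ((1 - w) * ν₀ x + w * ν₁ x)) ^ 2)) : ℝ) : EReal) :=
          Finset.sum_le_sum fun x _ => point_le _ _ _ (hA x) (hB x) (hφ x).1 (hφ x).2
      _ = _ := (ereal_coe_sum _ _).symm
end
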